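/- arXiv:1612.05963 — 2 statements merged into one kernel-verified Lean document; each statement's English description precedes it below -/
import Mathlib

section
/- Let M be a compact metric space and F = {f_λ : λ ∈ Λ} a finite family of continuous maps on M (an IFS). Suppose F has the finite shadowing property: for every ε > 0 there exists δ > 0 such that every finite δ-chain {x_0,…,x_m} (i.e., d(x_{k+1}, f_{λ_k}(x_k)) ≤ δ for some choice λ_k ∈ Λ) is ε-shadowed by a finite true chain {y_0,…,y_m} (i.e., y_{k+1} = f_{μ_k}(y_k) for some μ_k ∈ Λ and d(x_k, y_k) < ε). Then F has the (infinite) shadowing property: for every ε > 0 there exists δ > 0 such that every bi-infinite δ-chain {x_k}_{k∈ℤ} is ε-shadowed by a bi-infinite true chain {y_k}_{k∈ℤ}. -/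
open Metric Filter Topology

/-- Finite shadowing implies (bi-infinite) shadowing for an IFS of
continuous maps on a compact metric space. -/
theorem finite_shadowing_implies_shadowing
    {M : Type*} [MetricSpace M] [CompactSpace M]
    {Λ : Type*} [Finite Λ] [Nonempty Λ]
    (F : Λ → M → M) (hF : ∀ l : Λ, Continuous (F l))
    (hfin : ∀ ε > (0 : ℝ), ∃ δ > (0 : ℝ), ∀ (m : ℕ) (x : ℕ → M) (lam : ℕ → Λ),
      (∀ k < m, dist (x (k + 1)) (F (lam k) (x k)) ≤ δ) →
      ∃ (y : ℕ → M) (mu : ℕ → Λ),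
        (∀ k < m, y (k + 1) = F (mu k) (y k)) ∧ ∀ k ≤ m, dist (x k) (y k) < ε) :
    ∀ ε > (0 : ℝ), ∃ δ > (0 : ℝ), ∀ (x : ℤ → M) (lam : ℤ → Λ),
      (∀ k : ℤ, dist (x (k + 1)) (F (lam k) (x k)) ≤ δ) →
      ∃ (y : ℤ → M) (mu : ℤ → Λ),
        (∀ k : ℤ, y (k + 1) = F (mu k) (y k)) ∧ ∀ k : ℤ, dist (x k) (y k) ≤ ε := by
  intro ε hε
  obtain ⟨δ, hδ, hshad⟩ := hfin ε hε
  refine ⟨δ, hδ, ?_⟩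
  intro x lam hchain
  -- finite shadowing chains on [-n, n]
  have key : ∀ n : ℕ, ∃ (Y : ℤ → M) (MU : ℤ → Λ),
      (∀ k : ℤ, -(n:ℤ) ≤ k → k < n → Y (k+1) = F (MU k) (Y k)) ∧
      (∀ k : ℤ, -(n:ℤ) ≤ k → k ≤ n → dist (x k) (Y k) < ε) := by
    intro n
    have hch : ∀ j < 2*n, dist ((fun j => x ((j:ℤ) - n)) (j+1))
        (F ((fun j => lam ((j:ℤ) - n)) j) ((fun j => x ((j:ℤ) - n)) j)) ≤ δ := by
      intro j hj
      show dist (x (((j+1:ℕ):ℤ) - n)) (F (lam ((j:ℤ) - n)) (x ((j:ℤ) - n))) ≤ δ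
      have e2 : (((j+1:ℕ)):ℤ) - n = ((j:ℤ) - n) + 1 := by push_cast; ring
      rw [e2]
      exact hchain _
    obtain ⟨y, mu, h1, h2⟩ := hshad (2*n) (fun j => x ((j:ℤ) - n))
        (fun j => lam ((j:ℤ) - n)) hch
    refine ⟨fun k => y (k + n).toNat, fun k => mu (k + n).toNat, ?_, ?_⟩
    · intro k hk1 hk2
      show y (k + 1 + (n:ℤ)).toNat = F (mu (k + (n:ℤ)).toNat) (y (k + (n:ℤ)).toNat)
      have e1 : (k + 1 + (n:ℤ)).toNat = (k + n).toNat + 1 := by omega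
      rw [e1]
      exact h1 (k + n).toNat (by omega)
    · intro k hk1 hk2
      have := h2 (k + n).toNat (by omega)
      have e : (((k + (n:ℤ)).toNat : ℤ)) - n = k := by omega
      rwa [e] at this
  choose Y MU hY hdist using key
  -- pick an ultrafilter extending atTop
  let U : Ultrafilter ℕ := Ultrafilter.of atTop
  have hU : (U : Filter ℕ) ≤ atTop := Ultrafilter.of_le atTop
  -- limit points in compact M
  have hy : ∀ k : ℤ, ∃ p : M, Tendsto (fun n => Y n k) U (𝓝 p) := by
    intro k
    obtain ⟨p, -, hp⟩ := isCompact_univ.ultrafilter_le_nhds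
      (U.map (fun n => Y n k)) (by simp)
    exact ⟨p, hp⟩
  choose y hy using hy
  -- limit symbols in finite Λ
  have hmu : ∀ k : ℤ, ∃ l : Λ, {n : ℕ | MU n k = l} ∈ U := by
    intro k
    obtain ⟨l, -, hl⟩ := Ultrafilter.eq_pure_of_finite_mem (Set.finite_univ (α := Λ))
      (Filter.univ_mem (f := (U.map (fun n => MU n k) : Filter Λ)))
    refine ⟨l, ?_⟩
    have : {l} ∈ (U.map (fun n => MU n k) : Filter Λ) := by
      rw [hl]; exact Filter.mem_pure.2 rfl
    exact (by simpa [Filter.mem_map] using this : (fun n => MU n k) ⁻¹' {l} ∈ U)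
  choose mu hmu using hmu
  refine ⟨y, mu, ?_, ?_⟩
  · intro k
    have hbig : {n : ℕ | k.natAbs + 1 ≤ n} ∈ U :=
      hU (Filter.eventually_atTop.2 ⟨k.natAbs + 1, fun n h => h⟩)
    have t1 : Tendsto (fun n => Y n (k+1)) (U : Filter ℕ) (𝓝 (y (k+1))) := hy _
    have t2 : Tendsto (fun n => Y n (k+1)) (U : Filter ℕ) (𝓝 (F (mu k) (y k))) := by
      apply Tendsto.congr' _ (((hF (mu k)).tendsto (y k)).comp (hy k))
      filter_upwards [hmu k, hbig] with n h1 h2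
      have := hY n k (by omega) (by omega)
      simp only [Function.comp]
      rw [this, h1]
    exact tendsto_nhds_unique t1 t2
  · intro k
    have hbig : {n : ℕ | k.natAbs ≤ n} ∈ U :=
      hU (Filter.eventually_atTop.2 ⟨k.natAbs, fun n h => h⟩)
    have hev : ∀ᶠ n in (U : Filter ℕ), dist (x k) (Y n k) ≤ ε := by
      filter_upwards [hbig] with n hn
      exact le_of_lt (hdist n k (by omega) (by omega))
    exact le_of_tendsto (tendsto_const_nhds.dist (hy k)) hev
end

section
/- Let M be a compact metric space, F an IFS of homeomorphisms with shadowing property, expansive relative to σ with constant η, and let h be the map defined by unique shadowing as in the semi-conjugacy theorem (with 3ε < η). Then h is uniformly continuous: for every μ > 0 there exists γ > 0 such that r(x, y) < γ implies r(h(x), h(y)) < μ. -/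
open Metric

namespace IFS

variable {M : Type*} [TopologicalSpace M] {Λ : Type*}

/-- Forward composition along `σ`: the time-`n` (n ≥ 0) map of the IFS. -/
def fwdComp (F : Λ → M ≃ₜ M) (σ : ℤ → Λ) : ℕ → M ≃ₜ M
  | 0 => Homeomorph.refl M
  | n + 1 => (fwdComp F σ n).trans (F (σ n))

/-- Backward composition along `σ`: the time-`(-n)` map of the IFS. -/
def bwdComp (F : Λ → M ≃ₜ M) (σ : ℤ → Λ) : ℕ → M ≃ₜ M
  | 0 => Homeomorph.refl M
  | n + 1 => (bwdComp F σ n).trans (F (σ (-(n + 1 : ℤ)))).symm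

/-- The composition `F_{σ_k}` along the symbol sequence `σ`, for `k ∈ ℤ`. -/
def ifsComp (F : Λ → M ≃ₜ M) (σ : ℤ → Λ) : ℤ → M ≃ₜ M
  | Int.ofNat n => fwdComp F σ n
  | Int.negSucc n => bwdComp F σ (n + 1)

/-- The C⁰ distance `ρ₀` between two homeomorphisms. -/
noncomputable def rho0 {M : Type*} [MetricSpace M] (f g : M ≃ₜ M) : ℝ :=
  ⨆ x : M, max (dist (f x) (g x)) (dist (f.symm x) (g.symm x))

/-- The distance `D₀` between two IFSs indexed by the same set. -/
noncomputable def D0 {M : Type*} [MetricSpace M] {Λ : Type*} (F G : Λ → M ≃ₜ M) : ℝ :=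
  ⨆ l : Λ, rho0 (F l) (G l)

end IFS

open IFS

/-- The shadowing-induced tracking map `h` is uniformly continuous: if `F` is
expansive relative to `σ` with constant `η`, `3ε < η`, and `h` satisfies the tracking estimates
of the semi-conjugacy theorem with respect to an IFS `G`, then for every `μ > 0` there is
`γ > 0` such that `dist x y < γ` implies `dist (h x) (h y) < μ`. -/
theorem tracking_map_uniformly_continuous
    {M : Type*} [MetricSpace M] [CompactSpace M]
    {Λ : Type*} [Finite Λ] [Nonempty Λ]
    (F G : Λ → M ≃ₜ M) (σ : ℤ → Λ) (η ε δ : ℝ) (hη : 0 < η) (hε : 0 < ε)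
    (hεη : 3 * ε < η) (hδ : 0 < δ)
    (hexp : ∀ a b : M,
      (∀ 𝓃 : ℤ, dist (ifsComp F σ 𝓃 a) (ifsComp F σ 𝓃 b) ≤ η) → a = b)
    (hD : D0 F G < δ)
    (h : M → M)
    (htrack : ∀ (x : M) (k : ℤ), dist (ifsComp G σ k x) (ifsComp F σ k (h x)) < ε)
    (hclose : ∀ x : M, dist x (h x) < ε) :
    ∀ μ > (0 : ℝ), ∃ γ > (0 : ℝ), ∀ x y : M, dist x y < γ → dist (h x) (h y) < μ := by
  intro μ hμ
  by_contra hc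
  push_neg at hc
  -- For each n, pick bad points at distance < 1/(n+1)
  have hpick : ∀ n : ℕ, ∃ p : M × M, dist p.1 p.2 < 1 / (n + 1) ∧ μ ≤ dist (h p.1) (h p.2) := by
    intro n
    obtain ⟨x, y, hxy, hμ'⟩ := hc (1 / (n + 1)) (by positivity)
    exact ⟨(x, y), hxy, hμ'⟩
  choose p hp1 hp2 using hpick
  set x : ℕ → M := fun n => (p n).1 with hx
  set y : ℕ → M := fun n => (p n).2 with hy
  -- triple sequence in compact space
  obtain ⟨⟨z, a, b⟩, -, φ, hφ, hlim⟩ :=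
    (isCompact_univ : IsCompact (Set.univ : Set (M × M × M))).tendsto_subseq
      (x := fun n => (x n, h (x n), h (y n))) (fun n => Set.mem_univ _)
  rw [nhds_prod_eq, nhds_prod_eq] at hlim
  rw [Filter.tendsto_prod_iff'] at hlim
  obtain ⟨hlim1, hlim23⟩ := hlim
  rw [Filter.tendsto_prod_iff'] at hlim23
  obtain ⟨hlim2, hlim3⟩ := hlim23
  simp only [Function.comp_def] at hlim1 hlim2 hlim3
  -- dist x y → 0
  have hd0 : Filter.Tendsto (fun n => dist (x (φ n)) (y (φ n))) Filter.atTop (nhds 0) := by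
    have h1 : Filter.Tendsto (fun n : ℕ => 1 / ((φ n : ℝ) + 1)) Filter.atTop (nhds 0) := by
      apply Filter.Tendsto.comp (g := fun n : ℕ => 1 / ((n : ℝ) + 1))
      · exact tendsto_one_div_add_atTop_nhds_zero_nat
      · exact hφ.tendsto_atTop
    refine squeeze_zero (fun n => dist_nonneg) (fun n => le_of_lt ?_) h1
    exact hp1 (φ n)
  have hyz : Filter.Tendsto (fun n => y (φ n)) Filter.atTop (nhds z) := by
    apply tendsto_of_tendsto_of_dist hlim1
    simpa [dist_comm] using hd0
  -- a = b via expansivity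
  have hab : a = b := by
    apply hexp
    intro k
    have hFa : Filter.Tendsto (fun n => ifsComp F σ k (h (x (φ n)))) Filter.atTop
        (nhds (ifsComp F σ k a)) := ((ifsComp F σ k).continuous.tendsto a).comp hlim2
    have hFb : Filter.Tendsto (fun n => ifsComp F σ k (h (y (φ n)))) Filter.atTop
        (nhds (ifsComp F σ k b)) := ((ifsComp F σ k).continuous.tendsto b).comp hlim3
    have hGd : Filter.Tendsto
        (fun n => dist (ifsComp G σ k (x (φ n))) (ifsComp G σ k (y (φ n))))
        Filter.atTop (nhds 0) := by
      have hGx := ((ifsComp G σ k).continuous.tendsto z).comp hlim1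
      have hGy := ((ifsComp G σ k).continuous.tendsto z).comp hyz
      simpa using hGx.dist hGy
    have key : Filter.Tendsto
        (fun n => 2 * ε + dist (ifsComp G σ k (x (φ n))) (ifsComp G σ k (y (φ n))))
        Filter.atTop (nhds (2 * ε + 0)) := (tendsto_const_nhds).add hGd
    have hle : dist (ifsComp F σ k a) (ifsComp F σ k b) ≤ 2 * ε + 0 := by
      refine le_of_tendsto_of_tendsto (hFa.dist hFb) key ?_
      filter_upwards with n
      calc dist (ifsComp F σ k (h (x (φ n)))) (ifsComp F σ k (h (y (φ n))))
          ≤ dist (ifsComp F σ k (h (x (φ n)))) (ifsComp G σ k (x (φ n)))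
            + dist (ifsComp G σ k (x (φ n))) (ifsComp G σ k (y (φ n)))
            + dist (ifsComp G σ k (y (φ n))) (ifsComp F σ k (h (y (φ n)))) :=
            dist_triangle4 _ _ _ _
        _ ≤ 2 * ε + dist (ifsComp G σ k (x (φ n))) (ifsComp G σ k (y (φ n))) := by
            have h1 := htrack (x (φ n)) k
            have h2 := htrack (y (φ n)) k
            rw [dist_comm] at h1
            linarith
    linarith
  -- but dist a b ≥ μ
  have hμab : μ ≤ dist a b := by
    refine ge_of_tendsto (hlim2.dist hlim3) ?_
    filter_upwards with n
    exact hp2 (φ n)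
  rw [hab, dist_self] at hμab
  linarith
end
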